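/- Let a be an element of SL(2,ℂ) with a ≠ e and a ≠ −e, and set t = tr(a). Then an element c of SL(2,ℂ) commutes with a if and only if there exist μ, ν ∈ ℂ with c = μ·a + ν·e (as 2×2 matrices) and μ² + t·μ·ν + ν² = 1. -/

import Mathlib

/-- The trace of an element of SL(2,ℂ). -/
noncomputable def trSL (A : Matrix.SpecialLinearGroup (Fin 2) ℂ) : ℂ :=
  Matrix.trace (A : Matrix (Fin 2) (Fin 2) ℂ)

/-- Lemma 2.1(i), set-theoretic form: for `a ∈ SL(2,ℂ)` with `a ≠ ±e` and `t = tr a`,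
an element `c` commutes with `a` iff `c = μ•a + ν•e` for some `μ, ν` with
`μ² + tμν + ν² = 1`. -/
theorem centralizer_eq_linear_combinations
    (a : Matrix.SpecialLinearGroup (Fin 2) ℂ)
    (ha1 : (a : Matrix (Fin 2) (Fin 2) ℂ) ≠ 1)
    (ha2 : (a : Matrix (Fin 2) (Fin 2) ℂ) ≠ -1)
    (t : ℂ) (ht : t = trSL a)
    (c : Matrix.SpecialLinearGroup (Fin 2) ℂ) :
    c * a = a * c ↔
      ∃ μ ν : ℂ,
        (c : Matrix (Fin 2) (Fin 2) ℂ) = μ • (a : Matrix (Fin 2) (Fin 2) ℂ) + ν • 1 ∧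
        μ ^ 2 + t * μ * ν + ν ^ 2 = 1 := by
  set A := (a : Matrix (Fin 2) (Fin 2) ℂ) with hAdef
  set C := (c : Matrix (Fin 2) (Fin 2) ℂ) with hCdef
  have hdA : A 0 0 * A 1 1 - A 0 1 * A 1 0 = 1 := by
    have := a.2; rwa [Matrix.det_fin_two] at this
  have hdC : C 0 0 * C 1 1 - C 0 1 * C 1 0 = 1 := by
    have := c.2; rwa [Matrix.det_fin_two] at this
  have ht' : t = A 0 0 + A 1 1 := by
    rw [ht, trSL, Matrix.trace_fin_two]
  have hcomm : (c * a = a * c) ↔ C * A = A * C := by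
    constructor
    · intro h; exact congrArg Subtype.val h
    · intro h; exact Subtype.ext h
  rw [hcomm]
  -- nonscalar
  have hns : ¬ (A 0 1 = 0 ∧ A 1 0 = 0 ∧ A 0 0 = A 1 1) := by
    rintro ⟨hb, hg, had⟩
    have hα : A 0 0 = 1 ∨ A 0 0 = -1 := by
      have h1 : (A 0 0 - 1) * (A 0 0 + 1) = 0 := by
        rw [hb, hg, ← had] at hdA; linear_combination hdA
      rcases mul_eq_zero.mp h1 with h | h
      · left; linear_combination h
      · right; linear_combination h
    rcases hα with h | h
    · apply ha1
      ext i j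
      fin_cases i <;> fin_cases j <;>
        simp [← hAdef, hb, hg, h, ← had, Matrix.one_apply]
    · apply ha2
      ext i j
      fin_cases i <;> fin_cases j <;>
        simp [← hAdef, hb, hg, h, ← had, Matrix.one_apply]
  constructor
  · intro h
    have h01 : (C * A) 0 1 = (A * C) 0 1 := by rw [h]
    have h10 : (C * A) 1 0 = (A * C) 1 0 := by rw [h]
    have h00 : (C * A) 0 0 = (A * C) 0 0 := by rw [h]
    simp only [Matrix.mul_apply, Fin.sum_univ_two] at h01 h10 h00
    -- find μ ν with entry relations
    have key : ∃ μ ν : ℂ, C 0 0 = μ * A 0 0 + ν ∧ C 0 1 = μ * A 0 1 ∧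
        C 1 0 = μ * A 1 0 ∧ C 1 1 = μ * A 1 1 + ν := by
      by_cases hb : A 0 1 ≠ 0
      · refine ⟨C 0 1 / A 0 1, C 0 0 - C 0 1 / A 0 1 * A 0 0, by ring, by field_simp, ?_, ?_⟩
        · field_simp
          linear_combination - h00
        · field_simp
          linear_combination -h01
      · push_neg at hb
        by_cases hg : A 1 0 ≠ 0
        · refine ⟨C 1 0 / A 1 0, C 0 0 - C 1 0 / A 1 0 * A 0 0, by ring, ?_, by field_simp, ?_⟩
          · field_simp
            linear_combination h00
          · field_simp
            linear_combination h10
        · push_neg at hg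
          have had : A 0 0 ≠ A 1 1 := fun had => hns ⟨hb, hg, had⟩
          have had' : A 0 0 - A 1 1 ≠ 0 := sub_ne_zero.mpr had
          refine ⟨(C 0 0 - C 1 1) / (A 0 0 - A 1 1),
            C 0 0 - (C 0 0 - C 1 1) / (A 0 0 - A 1 1) * A 0 0, by ring, ?_, ?_, by field_simp; ring⟩
          · rw [hb] at h01 ⊢
            field_simp
            rcases mul_eq_zero.mp (show C 0 1 * (A 1 1 - A 0 0) = 0 by linear_combination h01) with h | h
            · simp [h]
            · exact absurd (by linear_combination -h) had'
          · rw [hg] at h10 ⊢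
            field_simp
            rcases mul_eq_zero.mp (show C 1 0 * (A 0 0 - A 1 1) = 0 by linear_combination h10) with h | h
            · simp [h]
            · exact absurd h had'
    obtain ⟨μ, ν, hp, hq, hr, hs⟩ := key
    refine ⟨μ, ν, ?_, ?_⟩
    · ext i j
      fin_cases i <;> fin_cases j <;>
        simp [hp, hq, hr, hs, Matrix.one_apply, mul_comm]
    · rw [hp, hq, hr, hs] at hdC
      rw [ht']
      linear_combination hdC - μ ^ 2 * hdA
  · rintro ⟨μ, ν, hC, -⟩
    rw [hC, add_mul, mul_add, smul_mul_assoc, mul_smul_comm, smul_mul_assoc,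
      mul_smul_comm, one_mul, mul_one]
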